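/- Let A be an N×N matrix over a commutative ring with N ≥ 2 and let f(λ) = det(λ I_N − A) be its characteristic polynomial. Then the second derivative of f satisfies f''(λ) = 2 · ∑_{1 ≤ k < ℓ ≤ N} det( (λ I_N − A)_{kℓ|kℓ} ) = 2 · ∑_{1 ≤ k < ℓ ≤ N} det( λ I_{N−2} − A_{kℓ|kℓ} ). -/

import Mathlib

/-- The strictly monotone embedding `Fin n → Fin (n+2)` whose image omits the two
indices `k` and `l`, provided `k < l`. -/
def skipTwo {n : ℕ} (k l : Fin (n + 2)) : Fin n → Fin (n + 2) :=
  fun r =>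
    if r.1 < k.1 then ⟨r.1, Nat.lt_succ_of_lt (Nat.lt_succ_of_lt r.isLt)⟩
    else if r.1 + 1 < l.1 then ⟨r.1 + 1, Nat.succ_lt_succ (Nat.lt_succ_of_lt r.isLt)⟩
    else ⟨r.1 + 2, Nat.succ_lt_succ (Nat.succ_lt_succ r.isLt)⟩

open Polynomial Matrix Finset

section Aux

variable {R : Type*} [CommRing R]

lemma derivative_finset_prod {ι : Type*} [DecidableEq ι] (s : Finset ι) (f : ι → R[X]) :
    derivative (∏ i ∈ s, f i) = ∑ i ∈ s, (∏ j ∈ s.erase i, f j) * derivative (f i) := by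
  induction s using Finset.induction_on with
  | empty => simp
  | @insert a s ha ih =>
    have key : ∀ i ∈ s, f a * ((∏ j ∈ s.erase i, f j) * derivative (f i))
        = (∏ j ∈ (insert a s).erase i, f j) * derivative (f i) := by
      intro i hi
      rw [Finset.erase_insert_of_ne (fun h => ha (by rw [h]; exact hi)),
        Finset.prod_insert (fun h => ha (Finset.mem_of_mem_erase h)), mul_assoc]
    rw [Finset.prod_insert ha, derivative_mul, ih, Finset.sum_insert ha,
      Finset.erase_insert ha, Finset.mul_sum, Finset.sum_congr rfl key,
      mul_comm (derivative (f a)), add_comm]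

lemma derivative_det' {m : ℕ} (M : Matrix (Fin m) (Fin m) R[X]) :
    derivative M.det = ∑ i, (M.updateCol i (fun k => derivative (M k i))).det := by
  rw [Matrix.det_apply', map_sum]
  simp_rw [derivative_mul, derivative_intCast, zero_mul, zero_add,
    derivative_finset_prod, Finset.mul_sum]
  rw [Finset.sum_comm]
  refine Finset.sum_congr rfl fun i _ => ?_
  rw [Matrix.det_apply']
  refine Finset.sum_congr rfl fun σ _ => ?_
  congr 1
  rw [← Finset.prod_erase_mul _ _ (Finset.mem_univ i)]
  congr 1
  · refine Finset.prod_congr rfl fun j hj => ?_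
    rw [Matrix.updateCol_apply, if_neg (Finset.ne_of_mem_erase hj)]
  · rw [Matrix.updateCol_apply, if_pos rfl]

lemma charmatrix_submatrix' {N m : ℕ} (A : Matrix (Fin N) (Fin N) R) (f : Fin m → Fin N)
    (hf : Function.Injective f) :
    (charmatrix A).submatrix f f = charmatrix (A.submatrix f f) := by
  ext a b
  by_cases h : a = b
  · subst h; simp [charmatrix_apply_eq]
  · simp [Matrix.submatrix_apply, charmatrix_apply_ne _ _ _ h,
      charmatrix_apply_ne _ _ _ (fun hh => h (hf hh))]

lemma derivative_charpoly' {m : ℕ} (A : Matrix (Fin (m+1)) (Fin (m+1)) R) :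
    derivative A.charpoly
      = ∑ i : Fin (m+1), (A.submatrix (Fin.succAbove i) (Fin.succAbove i)).charpoly := by
  have hdef : A.charpoly = (charmatrix A).det := rfl
  rw [hdef, derivative_det']
  refine Finset.sum_congr rfl fun i _ => ?_
  have hcol : (fun k => derivative (charmatrix A k i))
      = fun k => (1 : Matrix (Fin (m+1)) (Fin (m+1)) R[X]) k i := by
    funext k
    by_cases h : k = i
    · subst h; rw [charmatrix_apply_eq]; simp
    · rw [charmatrix_apply_ne _ _ _ h]; simp [Matrix.one_apply_ne h]
  rw [hcol, Matrix.det_succ_column _ i, Finset.sum_eq_single i]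
  · have h1 : ((charmatrix A).updateCol i
        fun k => (1 : Matrix (Fin (m+1)) (Fin (m+1)) R[X]) k i) i i = 1 := by
      rw [Matrix.updateCol_apply, if_pos rfl, Matrix.one_apply_eq]
    have h2 : (((charmatrix A).updateCol i
        fun k => (1 : Matrix (Fin (m+1)) (Fin (m+1)) R[X]) k i).submatrix
        i.succAbove i.succAbove) = charmatrix (A.submatrix i.succAbove i.succAbove) := by
      rw [← charmatrix_submatrix' A i.succAbove (Fin.succAbove_right_injective)]
      ext a b
      simp [Matrix.updateCol_apply, Fin.succAbove_ne i b]
    rw [h1, h2, Even.neg_one_pow ⟨i.1, rfl⟩, one_mul, one_mul]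
    rfl
  · intro k _ hk
    rw [Matrix.updateCol_apply, if_pos rfl, Matrix.one_apply_ne hk]
    ring
  · exact fun h => absurd (Finset.mem_univ i) h

end Aux

lemma skipTwo_val {n : ℕ} (k l : Fin (n + 2)) (r : Fin n) :
    (skipTwo k l r).1 = if r.1 < k.1 then r.1 else if r.1 + 1 < l.1 then r.1 + 1 else r.1 + 2 := by
  unfold skipTwo
  split_ifs <;> rfl

lemma succAbove_val' {m : ℕ} (i : Fin (m + 1)) (j : Fin m) :
    (i.succAbove j).1 = if j.1 < i.1 then j.1 else j.1 + 1 := by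
  rw [Fin.succAbove]
  split_ifs with h1 h2 h2
  · rfl
  · exact absurd h1 (by simpa [Fin.lt_def] using h2)
  · exact absurd (by simpa [Fin.lt_def] using h2) h1
  · rfl

/-- The `skipTwo` embedding determined by the unordered pair `{i, m}`. -/
def sk {n : ℕ} (i m : Fin (n + 2)) : Fin n → Fin (n + 2) :=
  if m < i then skipTwo m i else skipTwo i m

lemma sk_symm {n : ℕ} {i m : Fin (n + 2)} (h : i ≠ m) : sk i m = sk m i := by
  rcases lt_trichotomy i m with hlt | heq | hgt
  · rw [sk, sk, if_neg (asymm hlt), if_pos hlt]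
  · exact absurd heq h
  · rw [sk, sk, if_pos hgt, if_neg (asymm hgt)]

lemma succAbove_comp_eq_sk {n : ℕ} (i : Fin (n + 2)) (j : Fin (n + 1)) :
    Fin.succAbove i ∘ Fin.succAbove j = sk i (i.succAbove j) := by
  funext r
  have hi := i.isLt
  have hj := j.isLt
  have hr := r.isLt
  apply Fin.ext
  rw [Function.comp_apply, succAbove_val' i (j.succAbove r), succAbove_val' j r, sk]
  rw [apply_ite (fun f : Fin n → Fin (n+2) => (f r).1), skipTwo_val, skipTwo_val]
  have hm := succAbove_val' i j
  simp only [Fin.lt_def]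
  split_ifs at * <;> omega

/-- For an `N×N` matrix `A` (`N ≥ 2`) over a commutative ring with
characteristic polynomial `f(λ) = det(λ I − A)`, the second derivative satisfies
`f''(λ) = 2 ∑_{k<ℓ} det(λ I_{N−2} − A_{kℓ|kℓ})`, i.e. twice the sum over pairs
`k < ℓ` of the characteristic polynomials of the doubly-deleted principal minors
`A_{kℓ|kℓ}`. -/
theorem derivative_sq_charpoly_eq_two_mul_sum_double_minor_charpolys
    {R : Type*} [CommRing R] {n : ℕ}
    (A : Matrix (Fin (n + 2)) (Fin (n + 2)) R) :
    Polynomial.derivative (Polynomial.derivative A.charpoly)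
      = 2 * ∑ p ∈ Finset.univ.filter (fun p : Fin (n + 2) × Fin (n + 2) => p.1 < p.2),
          (A.submatrix (skipTwo p.1 p.2) (skipTwo p.1 p.2)).charpoly := by
  classical
  set g : Fin (n+2) → Fin (n+2) → R[X] :=
    fun i m => (A.submatrix (sk i m) (sk i m)).charpoly with hg
  have step : ∀ i : Fin (n+2),
      derivative (A.submatrix (Fin.succAbove i) (Fin.succAbove i)).charpoly
        = ∑ j : Fin (n+1), g i (i.succAbove j) := by
    intro i
    rw [derivative_charpoly']
    refine Finset.sum_congr rfl fun j _ => ?_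
    rw [Matrix.submatrix_submatrix, succAbove_comp_eq_sk]
  rw [derivative_charpoly', map_sum, Finset.sum_congr rfl fun i _ => step i]
  have h1 : ∀ i : Fin (n+2), ∑ j : Fin (n+1), g i (i.succAbove j)
      = ∑ m ∈ Finset.univ.erase i, g i m := by
    intro i
    rw [Finset.sum_erase_eq_sub (Finset.mem_univ i),
      Fin.sum_univ_succAbove (fun m => g i m) i]
    ring
  rw [Finset.sum_congr rfl fun i _ => h1 i]
  have h3 : ∑ i : Fin (n+2), ∑ m ∈ Finset.univ.erase i, g i m
      = ∑ p ∈ Finset.univ.filter (fun p : Fin (n+2) × Fin (n+2) => p.1 ≠ p.2), g p.1 p.2 := by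
    rw [Finset.sum_filter, Fintype.sum_prod_type]
    refine Finset.sum_congr rfl fun i _ => ?_
    rw [← Finset.sum_filter, Finset.filter_ne]
  rw [h3]
  have hsplit : Finset.univ.filter (fun p : Fin (n+2) × Fin (n+2) => p.1 ≠ p.2)
      = Finset.univ.filter (fun p => p.1 < p.2) ∪ Finset.univ.filter (fun p => p.2 < p.1) := by
    ext p
    simp only [Finset.mem_filter, Finset.mem_union, Finset.mem_univ, true_and]
    exact ne_iff_lt_or_gt
  have hdisj : Disjoint (Finset.univ.filter (fun p : Fin (n+2) × Fin (n+2) => p.1 < p.2))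
      (Finset.univ.filter (fun p => p.2 < p.1)) := by
    rw [Finset.disjoint_left]
    intro p hp hq
    simp only [Finset.mem_filter] at hp hq
    exact absurd hq.2 (asymm hp.2)
  rw [hsplit, Finset.sum_union hdisj]
  have hswap : ∑ p ∈ Finset.univ.filter (fun p : Fin (n+2) × Fin (n+2) => p.2 < p.1), g p.1 p.2
      = ∑ p ∈ Finset.univ.filter (fun p : Fin (n+2) × Fin (n+2) => p.1 < p.2), g p.1 p.2 := by
    refine Finset.sum_bij' (fun p _ => (p.2, p.1)) (fun p _ => (p.2, p.1)) ?_ ?_ ?_ ?_ ?_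
    · intro p hp; simp only [Finset.mem_filter, Finset.mem_univ, true_and] at hp ⊢; exact hp
    · intro p hp; simp only [Finset.mem_filter, Finset.mem_univ, true_and] at hp ⊢; exact hp
    · intro p _; rfl
    · intro p _; rfl
    · intro p hp
      simp only [Finset.mem_filter, Finset.mem_univ, true_and] at hp
      exact congrArg (fun f => (A.submatrix f f).charpoly) (sk_symm (ne_of_gt hp))
  rw [hswap, ← two_mul]
  congr 1
  refine Finset.sum_congr rfl fun p hp => ?_
  have hlt : p.1 < p.2 := (Finset.mem_filter.mp hp).2
  show (A.submatrix (sk p.1 p.2) (sk p.1 p.2)).charpoly = _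
  rw [sk, if_neg (asymm hlt)]
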